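/- (Measure density of the complement under exterior cone condition.) Let Ω ⊂ ℝⁿ be a bounded domain satisfying the uniform exterior cone condition with radius r̄ > 0 and cone C₀. Then there exists γ ∈ (0,1) such that for all r ∈ (0, r̄) and all x₀ ∈ ℝⁿ: if B_{3r/4}(x₀) ∩ Ωᶜ ≠ ∅, then |B_r(x₀) ∩ Ωᶜ| ≥ γ|B_r|. -/

import Mathlib

open Real Set MeasureTheory Metric Pointwise

theorem stmt16 (n : ℕ) (hn : 1 ≤ n)
    (Ω C₀ : Set (EuclideanSpace ℝ (Fin n))) (rbar : ℝ)
    (hΩ : IsOpen Ω) (hΩne : Ω.Nonempty) (hΩb : Bornology.IsBounded Ω)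
    (hrbar : 0 < rbar)
    -- `C₀` is a cone with vertex 0:
    (hC₀_cone : ∀ c : ℝ, 0 < c → c • C₀ = C₀)
    (hC₀_meas : MeasurableSet C₀)
    (hC₀_pos : 0 < volume (Metric.ball (0 : EuclideanSpace ℝ (Fin n)) (1/4) ∩ C₀))
    -- uniform exterior cone condition:
    (hcone : ∀ y ∈ frontier Ω,
      ∃ R : EuclideanSpace ℝ (Fin n) ≃ₗᵢ[ℝ] EuclideanSpace ℝ (Fin n),
        (Metric.ball y rbar ∩ ((fun z => y + R z) '' C₀)) ⊆ Ωᶜ) :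
    ∃ γ ∈ Set.Ioo (0:ℝ) 1, ∀ (r : ℝ) (x₀ : EuclideanSpace ℝ (Fin n)),
      0 < r → r < rbar → (Metric.ball x₀ (3 * r / 4) ∩ Ωᶜ).Nonempty →
      ENNReal.ofReal γ * volume (Metric.ball x₀ r)
        ≤ volume (Metric.ball x₀ r ∩ Ωᶜ) := by
  haveI : Nontrivial (EuclideanSpace ℝ (Fin n)) :=
    Module.nontrivial_of_finrank_pos (R := ℝ)
      (by rw [finrank_euclideanSpace_fin]; omega)
  set v : ENNReal := volume (Metric.ball (0 : EuclideanSpace ℝ (Fin n)) (1/4) ∩ C₀) with hv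
  set V : ENNReal := volume (Metric.ball (0 : EuclideanSpace ℝ (Fin n)) 1) with hV
  have hVpos : 0 < V := measure_ball_pos _ _ one_pos
  have hVlt : V < ⊤ := measure_ball_lt_top
  have hquarter : v ≤ ENNReal.ofReal ((1/4 : ℝ)^n) * V := by
    calc v ≤ volume (Metric.ball (0 : EuclideanSpace ℝ (Fin n)) (1/4)) :=
          measure_mono inter_subset_left
      _ = ENNReal.ofReal ((1/4 : ℝ)^n) * V := by
          rw [hV, Measure.addHaar_ball _ _ (by norm_num : (0:ℝ) ≤ 1/4),
            finrank_euclideanSpace_fin]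
  have hvV : v < V := by
    refine lt_of_le_of_lt hquarter ?_
    calc ENNReal.ofReal ((1/4 : ℝ)^n) * V < 1 * V := by
          rw [mul_comm _ V, mul_comm 1 V]
          refine ENNReal.mul_lt_mul_right hVpos.ne' hVlt.ne ?_
          rw [← ENNReal.ofReal_one]
          exact ENNReal.ofReal_lt_ofReal_iff_of_nonneg (by positivity) |>.2
            (pow_lt_one₀ (by norm_num) (by norm_num) (by omega))
      _ = V := one_mul V
  have hvlt : v < ⊤ := lt_of_lt_of_le hvV hVlt.le
  have hdivtop : v / V ≠ ⊤ := by
    exact (ENNReal.div_lt_top hvlt.ne hVpos.ne').ne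
  refine ⟨(v / V).toReal, ⟨?_, ?_⟩, ?_⟩
  · exact ENNReal.toReal_pos (ENNReal.div_ne_zero.2 ⟨hC₀_pos.ne', hVlt.ne⟩) hdivtop
  · have : v / V < 1 := by
      rw [ENNReal.div_lt_iff (Or.inl hVpos.ne') (Or.inl hVlt.ne), one_mul]
      exact hvV
    calc (v / V).toReal < (1 : ENNReal).toReal := by
          exact ENNReal.toReal_strict_mono (by norm_num) this
      _ = 1 := by simp
  intro r x₀ hr hrrbar hne
  have hofReal : ENNReal.ofReal (v / V).toReal = v / V := ENNReal.ofReal_toReal hdivtop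
  have hballr : volume (Metric.ball x₀ r) = ENNReal.ofReal (r ^ n) * V := by
    rw [hV, Measure.addHaar_ball _ _ hr.le, finrank_euclideanSpace_fin]
  have hLHS : ENNReal.ofReal (v / V).toReal * volume (Metric.ball x₀ r)
      = ENNReal.ofReal (r ^ n) * v := by
    rw [hofReal, hballr]
    rw [mul_comm (ENNReal.ofReal (r ^ n)) V, ← mul_assoc,
      ENNReal.div_mul_cancel hVpos.ne' hVlt.ne, mul_comm]
  rw [hLHS]
  by_cases hfr : (Metric.ball x₀ (3 * r / 4) ∩ frontier Ω).Nonempty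
  · -- Case 2: pick a frontier point
    obtain ⟨y₀, hy₀ball, hy₀fr⟩ := hfr
    obtain ⟨R, hR⟩ := hcone y₀ hy₀fr
    set f : EuclideanSpace ℝ (Fin n) → EuclideanSpace ℝ (Fin n) := fun z => y₀ + R z with hf
    have hsub : Metric.ball y₀ (r/4) ∩ (f '' C₀) ⊆ Metric.ball x₀ r ∩ Ωᶜ := by
      rintro z ⟨hz1, hz2⟩
      refine ⟨?_, hR ⟨Metric.ball_subset_ball (by linarith) hz1, hz2⟩⟩
      have h1 : dist z y₀ < r / 4 := hz1
      have h2 : dist y₀ x₀ < 3 * r / 4 := hy₀ball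
      calc dist z x₀ ≤ dist z y₀ + dist y₀ x₀ := dist_triangle _ _ _
        _ < r / 4 + 3 * r / 4 := by linarith
        _ = r := by ring
    have himg : Metric.ball y₀ (r/4) ∩ (f '' C₀)
        = f '' (Metric.ball (0 : EuclideanSpace ℝ (Fin n)) (r/4) ∩ C₀) := by
      rw [Set.image_inter (fun a b hab => by
        simpa [hf] using hab : Function.Injective f)]
      congr 1
      ext z
      simp only [hf, Set.mem_image, Metric.mem_ball]
      constructor
      · intro hz
        refine ⟨R.symm (z - y₀), ?_, by simp⟩
        have : ‖R.symm (z - y₀)‖ = ‖z - y₀‖ := R.symm.norm_map _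
        rw [dist_zero_right, this, ← dist_eq_norm]
        exact hz
      · rintro ⟨w, hw, rfl⟩
        rw [dist_zero_right] at hw
        have : dist (y₀ + R w) y₀ = ‖R w‖ := by
          rw [dist_eq_norm]; congr 1; abel
        rw [this, R.norm_map]
        exact hw
    have hmeas : MeasurableSet (Metric.ball (0 : EuclideanSpace ℝ (Fin n)) (r/4) ∩ C₀) :=
      measurableSet_ball.inter hC₀_meas
    have hvolimg : volume (f '' (Metric.ball (0 : EuclideanSpace ℝ (Fin n)) (r/4) ∩ C₀))
        = volume (Metric.ball (0 : EuclideanSpace ℝ (Fin n)) (r/4) ∩ C₀) := by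
      have h1 : f '' (Metric.ball (0 : EuclideanSpace ℝ (Fin n)) (r/4) ∩ C₀)
          = (y₀ + ·) '' (R '' (Metric.ball (0 : EuclideanSpace ℝ (Fin n)) (r/4) ∩ C₀)) := by
        rw [← Set.image_comp]; rfl
      rw [h1, Set.image_add_left, measure_preimage_add,
        LinearIsometryEquiv.image_eq_preimage_symm]
      exact R.symm.measurePreserving.measure_preimage hmeas.nullMeasurableSet
    have hsmul : Metric.ball (0 : EuclideanSpace ℝ (Fin n)) (r/4) ∩ C₀
        = r • (Metric.ball (0 : EuclideanSpace ℝ (Fin n)) (1/4) ∩ C₀) := by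
      rw [smul_set_inter₀ hr.ne', hC₀_cone r hr, _root_.smul_ball hr.ne', smul_zero,
        Real.norm_of_nonneg hr.le, mul_one_div]
    have hvolsmul : volume (Metric.ball (0 : EuclideanSpace ℝ (Fin n)) (r/4) ∩ C₀)
        = ENNReal.ofReal (r ^ n) * v := by
      rw [hsmul, Measure.addHaar_smul, finrank_euclideanSpace_fin,
        abs_of_nonneg (by positivity), hv]
    calc ENNReal.ofReal (r ^ n) * v
        = volume (Metric.ball y₀ (r/4) ∩ (f '' C₀)) := by
          rw [himg, hvolimg, hvolsmul]
      _ ≤ volume (Metric.ball x₀ r ∩ Ωᶜ) := measure_mono hsub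
  · -- Case 1: the ball 3r/4 misses the frontier, hence lies in Ωᶜ
    obtain ⟨z, hzball, hzc⟩ := hne
    have hsub : Metric.ball x₀ (3 * r / 4) ⊆ Ωᶜ := by
      have hcover : Metric.ball x₀ (3 * r / 4) ⊆ Ω ∪ (closure Ω)ᶜ := by
        intro w hw
        by_cases hwΩ : w ∈ Ω
        · exact Or.inl hwΩ
        · refine Or.inr fun hcl => ?_
          exact hfr ⟨w, hw, hcl, by rwa [hΩ.interior_eq]⟩
      have hdisj : Disjoint Ω (closure Ω)ᶜ :=
        Set.disjoint_compl_right_iff_subset.2 subset_closure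
      rcases (convex_ball x₀ (3 * r / 4)).isPreconnected.subset_or_subset hΩ
          isClosed_closure.isOpen_compl hdisj hcover with h | h
      · exact absurd (h hzball) hzc
      · exact h.trans (compl_subset_compl.2 subset_closure)
    have hsub2 : Metric.ball x₀ (3 * r / 4) ⊆ Metric.ball x₀ r ∩ Ωᶜ :=
      Set.subset_inter (Metric.ball_subset_ball (by linarith)) hsub
    calc ENNReal.ofReal (r ^ n) * v
        ≤ ENNReal.ofReal (r ^ n) * (ENNReal.ofReal ((1/4 : ℝ)^n) * V) :=
          mul_le_mul_right hquarter _
      _ = ENNReal.ofReal ((r/4) ^ n) * V := by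
          rw [← mul_assoc, ← ENNReal.ofReal_mul (by positivity), ← mul_pow,
            mul_one_div]
      _ ≤ ENNReal.ofReal ((3 * r / 4) ^ n) * V :=
          mul_le_mul_left (ENNReal.ofReal_le_ofReal
            (pow_le_pow_left₀ (by positivity) (by linarith) n)) V
      _ = volume (Metric.ball x₀ (3 * r / 4)) := by
          rw [hV, Measure.addHaar_ball _ _ (by linarith : (0:ℝ) ≤ 3 * r / 4),
            finrank_euclideanSpace_fin]
      _ ≤ volume (Metric.ball x₀ r ∩ Ωᶜ) := measure_mono hsub2
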